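/- Let n ≥ 4 and let G be any group containing elements σ, τ satisfying σ² = e, (στστ⁻¹)³ = e, (στ^m σ τ^{−m})² = e for 2 ≤ m ≤ n − 2, and (στ)^{n−1} = τⁿ. Then τⁿ = e. -/

import Mathlib

namespace Stmt6Aux

variable {G : Type*} [Group G]

/-- `s σ τ i = τ^i σ τ^{-i}`. -/
def s (σ τ : G) (i : ℕ) : G := τ ^ i * σ * (τ ^ i)⁻¹

/-- `P σ τ a l = s_a s_{a+1} ⋯ s_{a+l-1}`. -/
def P (σ τ : G) (a l : ℕ) : G := ((List.range' a l).map (s σ τ)).prod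

variable (σ τ : G)

lemma s_zero : s σ τ 0 = σ := by simp [s]

lemma s_conj (i j : ℕ) : τ ^ i * s σ τ j * (τ ^ i)⁻¹ = s σ τ (i + j) := by
  simp [s, pow_add, mul_inv_rev, mul_assoc]

lemma shift (i : ℕ) : τ * s σ τ i = s σ τ (i + 1) * τ := by
  have h := s_conj σ τ 1 i
  rw [pow_one] at h
  rw [add_comm i 1, ← h]
  group

lemma P_zero (a : ℕ) : P σ τ a 0 = 1 := by simp [P]

lemma P_succ_last (a l : ℕ) : P σ τ a (l + 1) = P σ τ a l * s σ τ (a + l) := by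
  have h : List.range' a (l + 1) = List.range' a l ++ [a + 1 * l] := List.range'_concat
  simp only [one_mul] at h
  rw [P, h, List.map_append, List.prod_append]
  simp [P]

lemma P_succ_head (a l : ℕ) : P σ τ a (l + 1) = s σ τ a * P σ τ (a + 1) l := by
  rw [P, List.range'_succ, List.map_cons, List.prod_cons]
  rfl

lemma P_shift (a l : ℕ) : τ * P σ τ a l = P σ τ (a + 1) l * τ := by
  induction l with
  | zero => simp [P_zero]
  | succ l ih =>
      rw [P_succ_last, P_succ_last, ← mul_assoc, ih, mul_assoc, mul_assoc, shift]
      rw [show a + 1 + l = a + l + 1 by omega]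

lemma prod_shift (L : List ℕ) (g : ℕ → ℕ) (y : ℕ) :
    τ * ((L.map fun j => P σ τ (g j) y).prod) =
      ((L.map fun j => P σ τ (g j + 1) y).prod) * τ := by
  induction L with
  | nil => simp
  | cons a L ih =>
      simp only [List.map_cons, List.prod_cons, ← mul_assoc, P_shift]
      rw [mul_assoc (P σ τ (g a + 1) y), ih, ← mul_assoc]

section WithRel

variable (n : ℕ)
variable (hs2 : ∀ i, s σ τ i * s σ τ i = 1)
variable (hcomm : ∀ i d, 2 ≤ d → d + 2 ≤ n → s σ τ i * s σ τ (i + d) = s σ τ (i + d) * s σ τ i)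

include hs2 in
lemma s_inv (i : ℕ) : (s σ τ i)⁻¹ = s σ τ i :=
  inv_eq_of_mul_eq_one_right (hs2 i)

include hcomm in
lemma s_comm_P : ∀ l a m, a + l + 1 ≤ m → m + 2 ≤ a + n →
    s σ τ m * P σ τ a l = P σ τ a l * s σ τ m := by
  intro l
  induction l with
  | zero => intro a m _ _; simp [P_zero]
  | succ l ih =>
      intro a m h1 h2
      rw [P_succ_last, ← mul_assoc, ih a m (by omega) (by omega), mul_assoc, mul_assoc]
      congr 1
      obtain ⟨d, hd2, hdn, rfl⟩ : ∃ d, 2 ≤ d ∧ d + 2 ≤ n ∧ m = (a + l) + d :=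
        ⟨m - (a + l), by omega, by omega, by omega⟩
      exact (hcomm (a + l) d hd2 hdn).symm

include hcomm in
lemma P_comm_P : ∀ v x y u, x + y < u → u + v + 1 ≤ x + n →
    P σ τ x y * P σ τ u v = P σ τ u v * P σ τ x y := by
  intro v
  induction v with
  | zero => intro x y u _ _; simp [P_zero]
  | succ v ih =>
      intro x y u h1 h2
      rw [P_succ_last, ← mul_assoc, ih x y u h1 (by omega), mul_assoc, mul_assoc]
      congr 1
      exact (s_comm_P σ τ n hcomm y x (u + v) (by omega) (by omega)).symm

variable (hPtau : ∀ a, P σ τ a (n - 1) = τ)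

include hs2 hPtau in
lemma star : ∀ k y a, k + y + 1 = n → (P σ τ (a + y + 1) k)⁻¹ * τ = P σ τ a y := by
  intro k
  induction k with
  | zero =>
      intro y a h
      have hy : y = n - 1 := by omega
      rw [P_zero, inv_one, one_mul, hy]
      exact (hPtau a).symm
  | succ k ih =>
      intro y a h
      rw [P_succ_head, mul_inv_rev, s_inv σ τ hs2, mul_assoc]
      have hsh : s σ τ (a + y + 1) * τ = τ * s σ τ (a + y) := (shift σ τ (a + y)).symm
      rw [hsh, ← mul_assoc]
      have hIH := ih (y + 1) a (by omega)
      rw [show a + y + 1 + 1 = a + (y + 1) + 1 by omega, hIH, P_succ_last, mul_assoc,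
        hs2, mul_one]

include hs2 hcomm in
lemma shuf : ∀ b a y, b + y + 1 ≤ n →
    ((List.range b).map fun j => P σ τ (a + b - j) (y + 1)).prod =
      ((List.range b).map fun j => P σ τ (a + b - j) y).prod * (P σ τ (a + y + 1) b)⁻¹ := by
  intro b
  induction b with
  | zero => simp [P_zero]
  | succ b ih =>
      intro a y h
      have hidx : ∀ j : ℕ, a + (b + 1) - j = a + 1 + b - j := fun j => by omega
      rw [List.range_succ, List.map_append, List.map_append, List.prod_append,
        List.prod_append]
      simp only [List.map_cons, List.map_nil, List.prod_cons, List.prod_nil, mul_one, hidx]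
      rw [show a + 1 + b - b = a + 1 by omega]
      rw [ih (a + 1) y (by omega)]
      rw [P_succ_last]
      -- commute (P (a+1+y+1) b)⁻¹ past P (a+1) y
      have hc : Commute (P σ τ (a + 1) y) (P σ τ (a + 1 + y + 1) b) :=
        P_comm_P σ τ n hcomm b (a + 1) y (a + 1 + y + 1) (by omega) (by omega)
      have hc' := (hc.inv_right).symm.eq
      -- (P (a+y+1) (b+1))⁻¹ = (P (a+1+y+1) b)⁻¹ * s (a+y+1)
      have hPinv : (P σ τ (a + y + 1) (b + 1))⁻¹
          = (P σ τ (a + 1 + y + 1) b)⁻¹ * s σ τ (a + y + 1) := by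
        rw [P_succ_head, mul_inv_rev, s_inv σ τ hs2,
          show a + y + 1 + 1 = a + 1 + y + 1 by omega]
      rw [hPinv, show a + 1 + y = a + y + 1 by omega] at *
      calc ((List.range b).map fun j => P σ τ (a + 1 + b - j) y).prod *
            (P σ τ (a + y + 1 + 1) b)⁻¹ * (P σ τ (a + 1) y * s σ τ (a + y + 1))
          = ((List.range b).map fun j => P σ τ (a + 1 + b - j) y).prod *
            ((P σ τ (a + y + 1 + 1) b)⁻¹ * P σ τ (a + 1) y) * s σ τ (a + y + 1) := by
            simp [mul_assoc]
        _ = ((List.range b).map fun j => P σ τ (a + 1 + b - j) y).prod *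
            (P σ τ (a + 1) y * (P σ τ (a + y + 1 + 1) b)⁻¹) * s σ τ (a + y + 1) := by
            rw [show a + y + 1 + 1 = a + 1 + y + 1 by omega] at *
            rw [hc']
        _ = ((List.range b).map fun j => P σ τ (a + 1 + b - j) y).prod *
            P σ τ (a + 1) y * ((P σ τ (a + y + 1 + 1) b)⁻¹ * s σ τ (a + y + 1)) := by
            simp [mul_assoc]

include hs2 hcomm hPtau in
lemma mainE : ∀ k, k ≤ n →
    τ ^ k = ((List.range k).map fun j => P σ τ (k - 1 - j) (n - k)).prod := by
  intro k
  induction k with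
  | zero => simp
  | succ k ih =>
      intro hk
      have hyk : n - k = (n - (k + 1)) + 1 := by omega
      set y := n - (k + 1) with hy
      rw [pow_succ', ih (by omega), prod_shift]
      have hcongr1 : ((List.range k).map fun j => P σ τ (k - 1 - j + 1) (n - k))
          = (List.range k).map fun j => P σ τ (0 + k - j) (y + 1) := by
        apply List.map_congr_left
        intro j hj
        rw [List.mem_range] at hj
        rw [show k - 1 - j + 1 = 0 + k - j by omega, hyk]
      rw [hcongr1, shuf σ τ n hs2 hcomm k 0 y (by omega), mul_assoc,
        star σ τ n hs2 hPtau k y 0 (by omega)]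
      have hcongr2 : ((List.range (k + 1)).map fun j => P σ τ (k + 1 - 1 - j) (n - (k + 1)))
          = ((List.range k).map fun j => P σ τ (0 + k - j) y) ++ [P σ τ 0 y] := by
        rw [List.range_succ, List.map_append]
        congr 1
        · apply List.map_congr_left
          intro j hj
          rw [List.mem_range] at hj
          rw [show k + 1 - 1 - j = 0 + k - j by omega]
        · simp [show k + 1 - 1 - k = 0 by omega, hy]
      rw [hcongr2, List.prod_append, List.prod_cons, List.prod_nil, mul_one]

include hs2 hcomm hPtau in
lemma key (hn : 1 ≤ n) : τ ^ n = 1 := by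
  rw [mainE σ τ n hs2 hcomm hPtau n le_rfl]
  apply List.prod_eq_one
  intro x hx
  simp only [List.mem_map] at hx
  obtain ⟨j, -, rfl⟩ := hx
  rw [Nat.sub_self, P_zero]

end WithRel

end Stmt6Aux

/-- Let `n ≥ 4` and let `G` be any group containing elements `σ, τ` satisfying
`σ² = e`, `(στστ⁻¹)³ = e`, `(στ^m στ^{-m})² = e` for `2 ≤ m ≤ n - 2`, and
`(στ)^{n-1} = τⁿ`. Then `τⁿ = e`. -/
theorem stmt_6 {G : Type*} [Group G] (n : ℕ) (hn : 4 ≤ n) (σ τ : G)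
    (h1 : σ ^ 2 = 1)
    (h2 : (σ * τ * σ * τ⁻¹) ^ 3 = 1)
    (h3 : ∀ m : ℕ, 2 ≤ m → m ≤ n - 2 → (σ * τ ^ m * σ * (τ ^ m)⁻¹) ^ 2 = 1)
    (h4 : (σ * τ) ^ (n - 1) = τ ^ n) :
    τ ^ n = 1 := by
  classical
  open Stmt6Aux in
  have hσ : σ * σ = 1 := by rw [← sq]; exact h1
  have hs2 : ∀ i, s σ τ i * s σ τ i = 1 := by
    intro i
    have hss : ∀ x : G, σ * (σ * x) = x := fun x => by rw [← mul_assoc, hσ, one_mul]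
    simp [s, mul_assoc, hss]
  have hcomm : ∀ i d, 2 ≤ d → d + 2 ≤ n →
      s σ τ i * s σ τ (i + d) = s σ τ (i + d) * s σ τ i := by
    intro i d hd2 hdn
    have hbase : s σ τ 0 * s σ τ d = s σ τ d * s σ τ 0 := by
      have h3d := h3 d hd2 (by omega)
      have hx : (s σ τ 0 * s σ τ d) ^ 2 = 1 := by
        rw [s_zero]
        have : σ * s σ τ d = σ * τ ^ d * σ * (τ ^ d)⁻¹ := by
          simp [s, mul_assoc]
        rw [this]; exact h3d
    -- from (AB)^2 = 1, A^2 = 1, B^2 = 1 we get AB = BA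
      have hAB : s σ τ 0 * s σ τ d = (s σ τ 0 * s σ τ d)⁻¹ :=
        (inv_eq_of_mul_eq_one_right (by rw [← sq]; exact hx)).symm
      rw [hAB, mul_inv_rev, s_inv σ τ hs2, s_inv σ τ hs2]
    calc s σ τ i * s σ τ (i + d)
        = (τ ^ i * s σ τ 0 * (τ ^ i)⁻¹) * (τ ^ i * s σ τ d * (τ ^ i)⁻¹) := by
          rw [s_conj, s_conj, add_zero]
      _ = τ ^ i * (s σ τ 0 * s σ τ d) * (τ ^ i)⁻¹ := by simp [mul_assoc]
      _ = τ ^ i * (s σ τ d * s σ τ 0) * (τ ^ i)⁻¹ := by rw [hbase]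
      _ = (τ ^ i * s σ τ d * (τ ^ i)⁻¹) * (τ ^ i * s σ τ 0 * (τ ^ i)⁻¹) := by
          simp [mul_assoc]
      _ = s σ τ (i + d) * s σ τ i := by rw [s_conj, s_conj, add_zero]
  have hstau : ∀ k, (σ * τ) ^ k = P σ τ 0 k * τ ^ k := by
    intro k
    induction k with
    | zero => simp [P_zero]
    | succ k ih =>
        rw [pow_succ, ih, P_succ_last, Nat.zero_add]
        have : τ ^ k * (σ * τ) = s σ τ k * τ ^ (k + 1) := by
          simp [s, pow_succ, mul_assoc]
        rw [mul_assoc, this, ← mul_assoc]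
  have hP0 : P σ τ 0 (n - 1) = τ := by
    have h := hstau (n - 1)
    rw [h4] at h
    have hτn : τ ^ n = τ * τ ^ (n - 1) := by
      rw [← pow_succ', show n - 1 + 1 = n by omega]
    rw [hτn] at h
    exact mul_right_cancel h.symm
  have hPtau : ∀ a, P σ τ a (n - 1) = τ := by
    intro a
    induction a with
    | zero => exact hP0
    | succ a ih =>
        have h := P_shift σ τ a (n - 1)
        rw [ih] at h
        exact mul_right_cancel h.symm
  exact key σ τ n hs2 hcomm hPtau (by omega)
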